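/- Let σ, γ > 0 and t ≥ 0. Then ∫_ℝ (t − 2σ√γ g)(1 − min(1, φ_{σ²γ}(t − σ√γ g)/φ_{σ²γ}(σ√γ g))) φ(g) dg = t, where φ is the standard Gaussian density and φ_{σ²γ} is the centered Gaussian density with variance σ²γ. -/
import Mathlib


open MeasureTheory

/-- Standard Gaussian density. -/
noncomputable def stdG (g : ℝ) : ℝ :=
  (Real.sqrt (2 * Real.pi))⁻¹ * Real.exp (-g ^ 2 / 2)

/-- Density of the one-dimensional centered Gaussian with variance `v`. -/
noncomputable def gpdf (v x : ℝ) : ℝ :=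
  (Real.sqrt (2 * Real.pi * v))⁻¹ * Real.exp (-x ^ 2 / (2 * v))

lemma stdG_pos (g : ℝ) : 0 < stdG g := by
  unfold stdG
  have := Real.pi_pos
  positivity

lemma stdG_even (g : ℝ) : stdG (-g) = stdG g := by
  unfold stdG; rw [neg_pow]; ring_nf

lemma stdG_continuous : Continuous stdG := by
  unfold stdG; fun_prop

lemma integrable_stdG : Integrable stdG := by
  have h : stdG = fun x : ℝ => (Real.sqrt (2 * Real.pi))⁻¹ * Real.exp (-(1/2 : ℝ) * x ^ 2) := by
    funext x; unfold stdG
    rw [show -x ^ 2 / 2 = -(1/2 : ℝ) * x ^ 2 by ring]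
  rw [h]
  exact (integrable_exp_neg_mul_sq (by norm_num : (0:ℝ) < 1/2)).const_mul _

lemma integrable_id_stdG : Integrable (fun g : ℝ => g * stdG g) := by
  have h : (fun g : ℝ => g * stdG g)
      = fun x : ℝ => (Real.sqrt (2 * Real.pi))⁻¹ * (x * Real.exp (-(1/2 : ℝ) * x ^ 2)) := by
    funext x; unfold stdG; ring_nf
  rw [h]
  exact (integrable_mul_exp_neg_mul_sq (by norm_num : (0:ℝ) < 1/2)).const_mul _

lemma integral_stdG : ∫ g : ℝ, stdG g = 1 := by
  have h : stdG = fun x : ℝ => (Real.sqrt (2 * Real.pi))⁻¹ * Real.exp (-(1/2 : ℝ) * x ^ 2) := by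
    funext x; unfold stdG
    rw [show -x ^ 2 / 2 = -(1/2 : ℝ) * x ^ 2 by ring]
  rw [h, integral_const_mul, integral_gaussian]
  have h2 : Real.pi / (1/2 : ℝ) = 2 * Real.pi := by ring
  rw [h2]
  exact inv_mul_cancel₀ (ne_of_gt (Real.sqrt_pos.2 (by positivity)))

lemma integral_id_stdG : ∫ g : ℝ, g * stdG g = 0 := by
  have h := MeasureTheory.integral_neg_eq_self (fun g : ℝ => g * stdG g) volume
  have h2 : (∫ g : ℝ, -g * stdG (-g)) = ∫ g : ℝ, -(g * stdG g) := by
    congr 1; funext g; rw [stdG_even]; ring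
  rw [h2, integral_neg] at h
  linarith

theorem sticky_first_moment (σ γ t : ℝ) (hσ : 0 < σ) (hγ : 0 < γ) (ht : 0 ≤ t) :
    ∫ g : ℝ,
      (t - 2 * σ * Real.sqrt γ * g) *
        (1 - min 1 (gpdf (σ ^ 2 * γ) (t - σ * Real.sqrt γ * g) /
          gpdf (σ ^ 2 * γ) (σ * Real.sqrt γ * g))) * stdG g = t := by
  set a := σ * Real.sqrt γ with ha_def
  have ha : 0 < a := mul_pos hσ (Real.sqrt_pos.2 hγ)
  have hv : σ ^ 2 * γ = a ^ 2 := by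
    rw [ha_def, mul_pow, Real.sq_sqrt hγ.le]
  set m := t / a with hm
  have ham : a * m = t := by
    rw [hm]; field_simp
  -- the ratio of gaussian densities
  have ratio : ∀ g : ℝ, gpdf (a ^ 2) (t - a * g) / gpdf (a ^ 2) (a * g)
      = Real.exp (m * g - m ^ 2 / 2) := by
    intro g
    unfold gpdf
    have hC : (0:ℝ) < (Real.sqrt (2 * Real.pi * a ^ 2))⁻¹ := by
      have := Real.pi_pos; positivity
    rw [mul_div_mul_left _ _ (ne_of_gt hC), ← Real.exp_sub]
    congr 1
    rw [hm]
    field_simp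
    ring
  -- the shifted density
  have shift : ∀ g : ℝ, Real.exp (m * g - m ^ 2 / 2) * stdG g = stdG (g - m) := by
    intro g
    unfold stdG
    rw [mul_left_comm, ← Real.exp_add]
    congr 1
    ring
  -- key pointwise identity
  have key : ∀ g : ℝ,
      (t - 2 * σ * Real.sqrt γ * g) *
        (1 - min 1 (gpdf (σ ^ 2 * γ) (t - σ * Real.sqrt γ * g) /
          gpdf (σ ^ 2 * γ) (σ * Real.sqrt γ * g))) * stdG g
      = (t - 2 * a * g) * stdG g
        - (t - 2 * a * g) * min (stdG g) (stdG (g - m)) := by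
    intro g
    have h2 : min 1 (gpdf (σ ^ 2 * γ) (t - a * g) / gpdf (σ ^ 2 * γ) (a * g)) * stdG g
        = min (stdG g) (stdG (g - m)) := by
      rw [hv, ratio g, min_mul_of_nonneg _ _ (stdG_pos g).le, one_mul, shift g]
    calc (t - 2 * σ * Real.sqrt γ * g) *
        (1 - min 1 (gpdf (σ ^ 2 * γ) (t - σ * Real.sqrt γ * g) /
          gpdf (σ ^ 2 * γ) (σ * Real.sqrt γ * g))) * stdG g
        = (t - 2 * a * g) * stdG g
          - (t - 2 * a * g) *
            (min 1 (gpdf (σ ^ 2 * γ) (t - a * g) / gpdf (σ ^ 2 * γ) (a * g)) * stdG g) := by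
          rw [ha_def]; ring
      _ = (t - 2 * a * g) * stdG g - (t - 2 * a * g) * min (stdG g) (stdG (g - m)) := by
          rw [h2]
  -- integrability of the first piece
  have I1 : Integrable (fun g : ℝ => (t - 2 * a * g) * stdG g) := by
    have h : (fun g : ℝ => (t - 2 * a * g) * stdG g)
        = fun g : ℝ => t * stdG g - (2 * a) * (g * stdG g) := by
      funext g; ring
    rw [h]
    exact (integrable_stdG.const_mul t).sub (integrable_id_stdG.const_mul (2 * a))
  -- integrability of F
  set F : ℝ → ℝ := fun g => (t - 2 * a * g) * min (stdG g) (stdG (g - m)) with hF_def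
  have IF : Integrable F := by
    refine I1.mono ?_ (ae_of_all _ fun g => ?_)
    · exact (((continuous_const.sub (continuous_const.mul continuous_id)).mul
        (stdG_continuous.min (stdG_continuous.comp (continuous_id.sub continuous_const)))).aestronglyMeasurable)
    · simp only [hF_def, Real.norm_eq_abs, abs_mul]
      apply mul_le_mul_of_nonneg_left _ (abs_nonneg _)
      rw [abs_of_nonneg (le_min (stdG_pos g).le (stdG_pos (g - m)).le),
        abs_of_nonneg (stdG_pos g).le]
      exact min_le_left _ _
  -- F is antisymmetric about m/2
  have hanti : ∀ g : ℝ, F (m - g) = -F g := by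
    intro g
    simp only [hF_def]
    have h1 : t - 2 * a * (m - g) = -(t - 2 * a * g) := by
      have : 2 * a * m = 2 * t := by rw [mul_assoc, ham]
      linarith
    have h2 : stdG (m - g) = stdG (g - m) := by
      rw [← stdG_even (m - g)]; ring_nf
    have h3 : m - g - m = -g := by ring
    rw [h1, h2, h3, stdG_even, min_comm]
    ring
  have hFint : ∫ g : ℝ, F g = 0 := by
    have h := MeasureTheory.integral_sub_left_eq_self F volume m
    have h2 : (∫ g : ℝ, F (m - g)) = ∫ g : ℝ, -F g := by
      congr 1; funext g; exact hanti g
    rw [h2, integral_neg] at h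
    linarith
  have hI1 : ∫ g : ℝ, (t - 2 * a * g) * stdG g = t := by
    have h : (fun g : ℝ => (t - 2 * a * g) * stdG g)
        = fun g : ℝ => t * stdG g - (2 * a) * (g * stdG g) := by
      funext g; ring
    rw [h, integral_sub (integrable_stdG.const_mul t) (integrable_id_stdG.const_mul (2 * a)),
      integral_const_mul, integral_const_mul, integral_stdG, integral_id_stdG]
    ring
  calc ∫ g : ℝ,
      (t - 2 * σ * Real.sqrt γ * g) *
        (1 - min 1 (gpdf (σ ^ 2 * γ) (t - σ * Real.sqrt γ * g) /
          gpdf (σ ^ 2 * γ) (σ * Real.sqrt γ * g))) * stdG g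
      = ∫ g : ℝ, ((t - 2 * a * g) * stdG g - F g) := by
        congr 1; funext g; exact key g
    _ = (∫ g : ℝ, (t - 2 * a * g) * stdG g) - ∫ g : ℝ, F g := integral_sub I1 IF
    _ = t := by rw [hFint, hI1, sub_zero]
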